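/- Under the stated setting, the weight vector w = D V m satisfies the 1-norm bound ‖w‖₁ = Σ_{i=1}^M |w_i| ≤ √(λ(B)) · ‖m‖₂, where ‖m‖₂ = (Σ_{j=1}^N m_j²)^{1/2}. -/

import Mathlib

open MeasureTheory MvPolynomial

/-- Theorem 2.1 (stability part): the weight vector `w = D V m` satisfies
`‖w‖₁ ≤ √(λ(B)) ‖m‖₂`. -/
theorem cheap_rule_weights_one_norm_bound {d n M N : ℕ} (hMN : N ≤ M)
    (hN : N = Nat.choose (n + d) d)
    (μ lam : Measure (Fin d → ℝ)) [IsFiniteMeasure μ] [IsFiniteMeasure lam]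
    (Ω B : Set (Fin d → ℝ))
    (p : Fin N → MvPolynomial (Fin d) ℝ)
    (hdeg : ∀ j, (p j).totalDegree ≤ n)
    (horth : ∀ h k, ∫ x in B, eval x (p h) * eval x (p k) ∂lam
      = if h = k then 1 else 0)
    (X : Fin M → (Fin d → ℝ)) (u : Fin M → ℝ)
    (hX : ∀ i, X i ∈ B) (hu : ∀ i, 0 < u i)
    (hquad : ∀ q : MvPolynomial (Fin d) ℝ, q.totalDegree ≤ 2 * n →
      ∫ x in B, eval x q ∂lam = ∑ i, u i * eval (X i) q)
    (m : Fin N → ℝ) (hm : ∀ j, m j = ∫ x in Ω, eval x (p j) ∂μ)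
    (w : Fin M → ℝ) (hw : ∀ i, w i = u i * ∑ j, eval (X i) (p j) * m j) :
    ∑ i, |w i| ≤ Real.sqrt (lam B).toReal * Real.sqrt (∑ j, (m j) ^ 2) := by
  set f : Fin M → ℝ := fun i => ∑ j, eval (X i) (p j) * m j with hf
  -- sum of weights equals lam B
  have hsum : ∑ i, u i = (lam B).toReal := by
    have h1 := hquad 1 (by simp)
    simp only [map_one, mul_one] at h1
    rw [← h1, setIntegral_const, smul_eq_mul, mul_one]
    rfl
  -- discrete orthonormality
  have horthd : ∀ h k, ∑ i, u i * (eval (X i) (p h) * eval (X i) (p k))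
      = if h = k then 1 else 0 := by
    intro h k
    have hd : (p h * p k).totalDegree ≤ 2 * n := by
      refine le_trans (totalDegree_mul _ _) ?_
      have := hdeg h; have := hdeg k; omega
    have hq := hquad (p h * p k) hd
    simp only [map_mul] at hq
    rw [← hq, horth]
  -- key identity
  have key : ∑ i, u i * f i ^ 2 = ∑ j, m j ^ 2 := by
    have step1 : ∀ i, u i * f i ^ 2
        = ∑ h, ∑ k, (m h * m k) * (u i * (eval (X i) (p h) * eval (X i) (p k))) := by
      intro i
      rw [hf, pow_two, Finset.sum_mul_sum, Finset.mul_sum]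
      refine Finset.sum_congr rfl fun h _ => ?_
      rw [Finset.mul_sum]
      refine Finset.sum_congr rfl fun k _ => ?_
      ring
    calc ∑ i, u i * f i ^ 2
        = ∑ i, ∑ h, ∑ k, (m h * m k) * (u i * (eval (X i) (p h) * eval (X i) (p k))) :=
          Finset.sum_congr rfl fun i _ => step1 i
      _ = ∑ h, ∑ k, ∑ i, (m h * m k) * (u i * (eval (X i) (p h) * eval (X i) (p k))) := by
          rw [Finset.sum_comm]
          exact Finset.sum_congr rfl fun h _ => Finset.sum_comm
      _ = ∑ h, ∑ k, (m h * m k) * (if h = k then 1 else 0) := by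
          refine Finset.sum_congr rfl fun h _ => Finset.sum_congr rfl fun k _ => ?_
          rw [← Finset.mul_sum, horthd]
      _ = ∑ j, m j ^ 2 := by simp [pow_two]
  -- Cauchy-Schwarz
  have habs : ∀ i, |w i| = u i * |f i| := by
    intro i
    rw [hw i, abs_mul, abs_of_pos (hu i)]
  have hCS : (∑ i, u i * |f i|) ^ 2 ≤ (∑ i, u i) * (∑ i, u i * f i ^ 2) := by
    refine Finset.sum_sq_le_sum_mul_sum_of_sq_eq_mul Finset.univ
      (fun i _ => (hu i).le)
      (fun i _ => mul_nonneg (hu i).le (sq_nonneg _))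
      (fun i _ => by rw [mul_pow, sq_abs]; ring)
  have hnn : 0 ≤ ∑ i, u i * |f i| :=
    Finset.sum_nonneg fun i _ => mul_nonneg (hu i).le (abs_nonneg _)
  have hle : ∑ i, u i * |f i| ≤ Real.sqrt ((∑ i, u i) * (∑ i, u i * f i ^ 2)) := by
    rw [← Real.sqrt_sq hnn]
    exact Real.sqrt_le_sqrt hCS
  calc ∑ i, |w i| = ∑ i, u i * |f i| := Finset.sum_congr rfl fun i _ => habs i
    _ ≤ Real.sqrt ((∑ i, u i) * (∑ i, u i * f i ^ 2)) := hle
    _ = Real.sqrt (lam B).toReal * Real.sqrt (∑ j, m j ^ 2) := by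
        rw [hsum, key, Real.sqrt_mul ENNReal.toReal_nonneg]
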